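/- arXiv:1712.06160 — 2 statements merged into one kernel-verified Lean document; each statement's English description precedes it below -/
import Mathlib

section
/- Let $X_1,\ldots,X_n$ be i.i.d. random variables taking values in a measurable space $\mathcal{X}$, let $h:\mathcal{X}^m\to\mathbb{R}$ be a bounded measurable kernel of $m\geq 2$ variables with $n\geq m$, let $m_h = E\,h(X_1,\ldots,X_m)$, and let $k=\lfloor n/m\rfloor$. Then for every $t>0$, $P\{|U_n(h)-m_h|\geq t\} \leq 2\exp\left(-\frac{t^2\,\lfloor n/m\rfloor}{2\|h\|_\infty^2}\right)$, where $\|h\|_\infty$ is the essential supremum bound of $|h|$. -/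
open MeasureTheory ProbabilityTheory Real
open Function
set_option maxHeartbeats 1000000

/-- The U-statistic of order `m` with kernel `h` evaluated on the data `x`:
`U_n(h) = ((n-m)!/n!) ∑_{(i₁,…,i_m) distinct} h(x_{i₁},…,x_{i_m})`,
where the sum ranges over all injections `Fin m ↪ Fin n` (i.e. all `m`-tuples of
distinct indices). -/
noncomputable def Ustat {𝒳 : Type*} {m n : ℕ} (h : (Fin m → 𝒳) → ℝ) (x : Fin n → 𝒳) : ℝ :=
  (((n - m).factorial : ℝ) / (n.factorial : ℝ)) * ∑ ι : Fin m ↪ Fin n, h fun j => x (ι j)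

section Comb
variable {m n : ℕ}




/-- Any embedding `Fin m ↪ Fin n` can be carried to another by a permutation. -/
lemma exists_perm_comp (e ι : Fin m ↪ Fin n) : ∃ σ : Equiv.Perm (Fin n), ∀ j, σ (e j) = ι j := by
  classical
  have hce := Fintype.card_congr (Equiv.ofInjective ⇑e e.injective)
  have hci := Fintype.card_congr (Equiv.ofInjective ⇑ι ι.injective)
  have hcard : Fintype.card ↥((Set.range ⇑e)ᶜ) = Fintype.card ↥((Set.range ⇑ι)ᶜ) := by
    rw [Fintype.card_compl_set, Fintype.card_compl_set, ← hce, ← hci]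
  refine ⟨(Equiv.Set.sumCompl (Set.range ⇑e)).symm.trans
    (((((Equiv.ofInjective ⇑e e.injective).symm.trans
      (Equiv.ofInjective ⇑ι ι.injective))).sumCongr
      (Fintype.equivOfCardEq hcard)).trans (Equiv.Set.sumCompl (Set.range ⇑ι))), fun j => ?_⟩
  simp only [Equiv.trans_apply]
  rw [Equiv.Set.sumCompl_symm_apply_of_mem (Set.mem_range_self j)]
  simp [Equiv.ofInjective_symm_apply]

lemma card_fixing (e : Fin m ↪ Fin n) :
    Fintype.card {τ : Equiv.Perm (Fin n) // ∀ j, τ (e j) = e j} = (n - m).factorial := by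
  classical
  have h1 : {τ : Equiv.Perm (Fin n) // ∀ j, τ (e j) = e j} ≃
      {τ : Equiv.Perm (Fin n) // ∀ a, ¬ (a ∉ Set.range ⇑e) → τ a = a} := by
    refine Equiv.subtypeEquivRight fun τ => ?_
    constructor
    · rintro hτ a ha
      rcases not_not.mp ha with ⟨j, rfl⟩
      exact hτ j
    · intro hτ j
      exact hτ (e j) (not_not.mpr ⟨j, rfl⟩)
  rw [Fintype.card_congr h1, Fintype.card_congr
    (Equiv.Perm.subtypeEquivSubtypePerm (fun a => a ∉ Set.range ⇑e)).symm,
    Fintype.card_perm]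
  congr 1
  have hce := Fintype.card_congr (Equiv.ofInjective ⇑e e.injective)
  simp only [Fintype.card_fin] at hce
  rw [Fintype.card_subtype_compl, Fintype.card_fin]
  congr 1
  exact hce.symm

/-- The key symmetrization identity. -/
lemma sum_perm_comp (e : Fin m ↪ Fin n) (g : (Fin m → Fin n) → ℝ) :
    ∑ σ : Equiv.Perm (Fin n), g (fun j => σ (e j)) =
      ((n - m).factorial : ℝ) * ∑ ι : Fin m ↪ Fin n, g ⇑ι := by
  classical
  choose σ₀ hσ₀ using fun ι : Fin m ↪ Fin n => exists_perm_comp e ι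
  have hF : ∀ (ι : Fin m ↪ Fin n) (τ : {τ : Equiv.Perm (Fin n) // ∀ j, τ (e j) = e j}) (j : Fin m),
      (σ₀ ι * (τ : Equiv.Perm (Fin n))) (e j) = ι j := by
    intro ι τ j
    simp [Equiv.Perm.mul_apply, τ.2 j, hσ₀]
  let E : (Fin m ↪ Fin n) × {τ : Equiv.Perm (Fin n) // ∀ j, τ (e j) = e j} ≃ Equiv.Perm (Fin n) :=
  { toFun := fun p => σ₀ p.1 * (p.2 : Equiv.Perm (Fin n))
    invFun := fun σ => ⟨e.trans σ.toEmbedding,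
      ⟨(σ₀ (e.trans σ.toEmbedding))⁻¹ * σ, fun j => by
        have := hσ₀ (e.trans σ.toEmbedding) j
        simp only [Function.Embedding.trans_apply, Equiv.coe_toEmbedding] at this
        simp [Equiv.Perm.mul_apply, ← this]⟩⟩
    left_inv := by
      rintro ⟨ι, τ⟩
      have h1 : e.trans (σ₀ ι * (τ : Equiv.Perm (Fin n))).toEmbedding = ι :=
        Function.Embedding.ext fun j => hF ι τ j
      simp [h1, Subtype.ext_iff, Prod.ext_iff]
    right_inv := fun σ => by simp }
  rw [← Equiv.sum_comp E (fun σ => g (fun j => σ (e j))), Fintype.sum_prod_type]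
  have hterm : ∀ (ι : Fin m ↪ Fin n) (τ : {τ : Equiv.Perm (Fin n) // ∀ j, τ (e j) = e j}),
      g (fun j => (E (ι, τ)) (e j)) = g ⇑ι := by
    intro ι τ
    congr 1
    funext j
    exact hF ι τ j
  calc ∑ ι : Fin m ↪ Fin n, ∑ τ : {τ : Equiv.Perm (Fin n) // ∀ j, τ (e j) = e j},
        g (fun j => (E (ι, τ)) (e j))
      = ∑ ι : Fin m ↪ Fin n, ∑ _τ : {τ : Equiv.Perm (Fin n) // ∀ j, τ (e j) = e j}, g ⇑ι := by
        refine Finset.sum_congr rfl fun ι _ => Finset.sum_congr rfl fun τ _ => hterm ι τ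
    _ = ((n - m).factorial : ℝ) * ∑ ι : Fin m ↪ Fin n, g ⇑ι := by
        simp [Finset.sum_const, card_fixing e, Finset.mul_sum, mul_comm]

end Comb

section Meas


variable {𝒳 : Type*} [MeasurableSpace 𝒳]

lemma measurable_comp_right {α β : Type*} [MeasurableSpace 𝒳] (e : α → β) :
    Measurable (fun x : β → 𝒳 => (fun a => x (e a))) :=
  measurable_pi_lambda _ fun a => measurable_pi_apply (e a)

/-- Mapping a product of identical probability measures along precomposition with an
injection gives the smaller product. -/
lemma map_pi_comp (μ : Measure 𝒳) [IsProbabilityMeasure μ] {α β : Type*} [Fintype α] [Fintype β]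
    (e : α → β) (he : Injective e) :
    (Measure.pi fun _ : β => μ).map (fun x a => x (e a)) = Measure.pi (fun _ : α => μ) := by
  classical
  refine (Measure.pi_eq fun s hs => ?_).symm
  rw [Measure.map_apply (measurable_comp_right e) (MeasurableSet.univ_pi hs)]
  set t : β → Set 𝒳 := fun b => if hb : ∃ a, e a = b then s hb.choose else Set.univ with ht
  have hte : ∀ a, t (e a) = s a := by
    intro a
    have hb : ∃ a', e a' = e a := ⟨a, rfl⟩
    have : hb.choose = a := he hb.choose_spec
    simp [ht, dif_pos hb, this]
  have hpre : (fun (x : β → 𝒳) a => x (e a)) ⁻¹' Set.pi Set.univ s = Set.pi Set.univ t := by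
    ext x
    simp only [Set.mem_preimage, Set.mem_pi, Set.mem_univ, forall_true_left, true_implies]
    constructor
    · intro hx b
      by_cases hb : ∃ a, e a = b
      · have h2 := hb.choose_spec
        simp only [ht, dif_pos hb]
        have := hx hb.choose
        rwa [h2] at this
      · simp [ht, dif_neg hb]
    · intro hx a
      have := hx (e a)
      rwa [hte a] at this
  rw [hpre, Measure.pi_pi]
  have h1 : ∏ b : β, μ (t b) = ∏ b ∈ Finset.univ.image e, μ (t b) := by
    refine (Finset.prod_subset (Finset.subset_univ _) fun b _ hb => ?_).symm
    have hnb : ¬ ∃ a, e a = b := by simpa [Finset.mem_image] using hb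
    simp [ht, dif_neg hnb]
  rw [h1, Finset.prod_image (fun a _ a' _ hh => he hh)]
  exact (Finset.prod_congr rfl fun a _ => by rw [hte a]).symm


lemma block_prod (μ : Measure 𝒳) [IsProbabilityMeasure μ] {m : ℕ}
    (F : (Fin m → 𝒳) → ℝ) (k : ℕ) :
    ∀ (N : Type) [Fintype N] (J : Fin k × Fin m → N), Injective J →
      ∫ x, ∏ i : Fin k, F (fun j => x (J (i, j))) ∂(Measure.pi fun _ : N => μ)
        = (∫ y, F y ∂(Measure.pi fun _ : Fin m => μ)) ^ k := by
  induction k with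
  | zero =>
    intro N _ J _
    simp
  | succ k ih =>
    intro N _ J hJ
    classical
    set S : Set N := Set.range (fun j => J (Fin.last k, j)) with hS
    have hlastinj : Injective (fun j => J (Fin.last k, j)) := by
      intro a b hab
      have := hJ hab
      simpa [Prod.ext_iff] using this
    let eL : Fin m ≃ S := Equiv.ofInjective _ hlastinj
    let E1 : (Fin m ⊕ ↥(Sᶜ)) ≃ N := (eL.sumCongr (Equiv.refl ↥(Sᶜ))).trans (Equiv.Set.sumCompl S)
    have hinl : ∀ j, E1 (Sum.inl j) = J (Fin.last k, j) := by
      intro j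
      simp only [E1, Equiv.trans_apply, Equiv.sumCongr_apply, Sum.map_inl,
        Equiv.Set.sumCompl_apply_inl]
      rfl
    have hinr : ∀ y : ↥(Sᶜ), E1 (Sum.inr y) = ↑y := by
      intro y
      simp only [E1, Equiv.trans_apply, Equiv.sumCongr_apply, Sum.map_inr, Equiv.refl_apply,
        Equiv.Set.sumCompl_apply_inr]
    let J' : Fin k × Fin m → ↥(Sᶜ) := fun p => ⟨J (p.1.castSucc, p.2), by
      simp only [Set.mem_compl_iff, hS, Set.mem_range]
      rintro ⟨j, hj⟩
      have := hJ hj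
      have h2 : (Fin.last k) = p.1.castSucc := (Prod.ext_iff.mp this).1
      exact (Fin.castSucc_lt_last p.1).ne h2.symm⟩
    have hJ' : Injective J' := by
      intro p q hpq
      have : J (p.1.castSucc, p.2) = J (q.1.castSucc, q.2) := Subtype.ext_iff.mp hpq
      have := hJ this
      rcases p with ⟨p1, p2⟩; rcases q with ⟨q1, q2⟩
      simp only [Prod.ext_iff] at this ⊢
      exact ⟨Fin.castSucc_injective _ this.1, this.2⟩
    let Em : ((Fin m ⊕ ↥(Sᶜ)) → 𝒳) ≃ᵐ ((Fin m → 𝒳) × (↥(Sᶜ) → 𝒳)) :=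
      MeasurableEquiv.sumPiEquivProdPi (fun _ => 𝒳)
    let Ec : ((Fin m ⊕ ↥(Sᶜ)) → 𝒳) ≃ᵐ (N → 𝒳) :=
      MeasurableEquiv.piCongrLeft (fun _ => 𝒳) E1
    have MP : MeasurePreserving (fun z => Ec (Em.symm z))
        ((Measure.pi fun _ : Fin m => μ).prod (Measure.pi fun _ : ↥(Sᶜ) => μ))
        (Measure.pi fun _ : N => μ) :=
      (measurePreserving_piCongrLeft (fun _ : N => μ) E1).comp
        (measurePreserving_sumPiEquivProdPi_symm (fun _ : Fin m ⊕ ↥(Sᶜ) => μ))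
    have hEval : ∀ (u : Fin m → 𝒳) (v : ↥(Sᶜ) → 𝒳) (c : Fin m ⊕ ↥(Sᶜ)),
        Ec (Em.symm (u, v)) (E1 c) = Sum.elim u v c := by
      intro u v c
      have h1 : Ec (Em.symm (u, v)) (E1 c) = (Em.symm (u, v)) c := by
        simp only [Ec, MeasurableEquiv.piCongrLeft]
        exact Equiv.piCongrLeft_apply_apply (fun _ => 𝒳) E1 _ c
      rw [h1]
      cases c <;> rfl
    have key : ∀ z : (Fin m → 𝒳) × (↥(Sᶜ) → 𝒳),
        (∏ i : Fin (k+1), F (fun j => (Ec (Em.symm z)) (J (i, j)))) =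
          F z.1 * ∏ i : Fin k, F (fun j => z.2 (J' (i, j))) := by
      rintro ⟨u, v⟩
      rw [Fin.prod_univ_castSucc]
      rw [mul_comm]
      congr 1
      · congr 1
        funext j
        rw [← hinl j, hEval]
        rfl
      · refine Finset.prod_congr rfl fun i _ => ?_
        congr 1
        funext j
        have hcoord : J (i.castSucc, j) = E1 (Sum.inr (J' (i, j))) := by
          rw [hinr]
        rw [hcoord, hEval]
        rfl
    rw [← MP.integral_comp (MeasurableEquiv.measurableEmbedding (Em.symm.trans Ec))]
    simp only [key]
    rw [integral_prod_mul (f := F) (g := fun v : ↥(Sᶜ) → 𝒳 => ∏ i : Fin k, F (fun j => v (J' (i, j))))]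
    rw [ih ↥(Sᶜ) J' hJ']
    rw [pow_succ, mul_comm]

end Meas

section Hoeff


lemma hoeff_D_pos {q : ℝ} (hq0 : 0 ≤ q) (hq1 : q ≤ 1) (y : ℝ) : 0 < 1 - q + q * exp y := by
  rcases eq_or_lt_of_le hq0 with h | h
  · simp [← h]
  · nlinarith [exp_pos y, mul_pos h (exp_pos y)]

lemma hoeff_log {q : ℝ} (hq0 : 0 ≤ q) (hq1 : q ≤ 1) (x : ℝ) :
    Real.log (1 - q + q * exp x) ≤ x ^ 2 / 8 + q * x := by
  have hD := hoeff_D_pos hq0 hq1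
  set f2 : ℝ → ℝ := fun y => y / 4 + q - q * exp y / (1 - q + q * exp y) with hf2
  set g : ℝ → ℝ := fun y => y ^ 2 / 8 + q * y - Real.log (1 - q + q * exp y) with hg
  have hDd : ∀ y, HasDerivAt (fun y => 1 - q + q * exp y) (q * exp y) y := fun y =>
    ((Real.hasDerivAt_exp y).const_mul q).const_add (1 - q)
  have hg' : ∀ y, HasDerivAt g (f2 y) y := by
    intro y
    have h1 : HasDerivAt (fun y : ℝ => y ^ 2 / 8 + q * y) (y / 4 + q) y := by
      have := ((hasDerivAt_pow 2 y).div_const 8).add ((hasDerivAt_id y).const_mul q)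
      exact this.congr_deriv (by norm_num; ring)
    have h2 : HasDerivAt (fun y => Real.log (1 - q + q * exp y))
        (q * exp y / (1 - q + q * exp y)) y := (hDd y).log (hD y).ne'
    exact h1.sub h2
  have hf2' : ∀ y, HasDerivAt f2
      (1 / 4 - q * (1 - q) * exp y / (1 - q + q * exp y) ^ 2) y := by
    intro y
    have h1 : HasDerivAt (fun y : ℝ => y / 4 + q) (1 / 4) y := by
      simpa using ((hasDerivAt_id y).div_const 4).add_const q
    have h2 : HasDerivAt (fun y => q * exp y / (1 - q + q * exp y))
        ((q * exp y * (1 - q + q * exp y) - q * exp y * (q * exp y)) / (1 - q + q * exp y) ^ 2) y :=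
      ((Real.hasDerivAt_exp y).const_mul q).div (hDd y) (hD y).ne'
    have h3 := h1.sub h2
    have := (hD y).ne'
    exact h3.congr_deriv (by field_simp; ring)
  have hderiv_nonneg : ∀ y, 0 ≤ 1 / 4 - q * (1 - q) * exp y / (1 - q + q * exp y) ^ 2 := by
    intro y
    rw [sub_nonneg, div_le_iff₀ (pow_pos (hD y) 2)]
    nlinarith [sq_nonneg (1 - q - q * exp y), exp_pos y]
  have hf2mono : Monotone f2 :=
    monotone_of_deriv_nonneg (fun y => (hf2' y).differentiableAt) (fun y => by
      rw [(hf2' y).deriv]; exact hderiv_nonneg y)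
  have hf20 : f2 0 = 0 := by
    simp [hf2, exp_zero]
  have hgdiff : Differentiable ℝ g := fun y => (hg' y).differentiableAt
  have hg0 : g 0 = 0 := by simp [hg]
  have hfinal : 0 ≤ g x := by
    rcases le_total 0 x with hx | hx
    · have hmono : MonotoneOn g (Set.Ici (0 : ℝ)) := by
        refine monotoneOn_of_deriv_nonneg (convex_Ici 0) hgdiff.continuous.continuousOn
          (hgdiff.differentiableOn) (fun y hy => ?_)
        rw [(hg' y).deriv]
        rw [interior_Ici] at hy
        have := hf2mono (le_of_lt hy)
        rwa [hf20] at this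
      have := hmono (Set.self_mem_Ici) (Set.mem_Ici.mpr hx) hx
      rwa [hg0] at this
    · have hanti : AntitoneOn g (Set.Iic (0 : ℝ)) := by
        refine antitoneOn_of_deriv_nonpos (convex_Iic 0) hgdiff.continuous.continuousOn
          (hgdiff.differentiableOn) (fun y hy => ?_)
        rw [(hg' y).deriv]
        rw [interior_Iic] at hy
        have := hf2mono (le_of_lt hy)
        rw [hf20] at this
        exact this
      have := hanti (Set.mem_Iic.mpr hx) (Set.self_mem_Iic) hx
      rwa [hg0] at this
  simp only [hg] at hfinal
  linarith

lemma hoeff_point {q : ℝ} (hq0 : 0 ≤ q) (hq1 : q ≤ 1) (x : ℝ) :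
    (1 - q) * exp (-(q * x)) + q * exp ((1 - q) * x) ≤ exp (x ^ 2 / 8) := by
  have hD := hoeff_D_pos hq0 hq1 x
  have e1 : exp ((1 - q) * x) = exp x * exp (-(q * x)) := by
    rw [← Real.exp_add]; ring_nf
  have e2 : (1 - q) * exp (-(q * x)) + q * exp ((1 - q) * x)
      = exp (-(q * x)) * (1 - q + q * exp x) := by
    rw [e1]; ring
  rw [e2, ← Real.exp_log hD, ← Real.exp_add]
  apply Real.exp_le_exp.mpr
  have := hoeff_log hq0 hq1 x
  linarith

/-- Hoeffding's lemma: mgf bound for a bounded centered random variable. -/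
lemma hoeff_mgf {α : Type*} [MeasurableSpace α] (ν : Measure α) [IsProbabilityMeasure ν]
    (Y : α → ℝ) (hY : Measurable Y) (a b : ℝ) (hab : ∀ z, Y z ∈ Set.Icc a b) (s : ℝ) :
    ∫ z, exp (s * (Y z - ∫ w, Y w ∂ν)) ∂ν ≤ exp (s ^ 2 * (b - a) ^ 2 / 8) := by
  have hne : Nonempty α := by
    by_contra hα
    rw [not_nonempty_iff] at hα
    have h1 : ν Set.univ = 1 := measure_univ
    rw [Set.univ_eq_empty_iff.mpr hα, measure_empty] at h1
    exact zero_ne_one h1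
  obtain ⟨z₀⟩ := hne
  have hle : a ≤ b := le_trans (hab z₀).1 (hab z₀).2
  set μY := ∫ w, Y w ∂ν with hμY
  have hYint : Integrable Y ν := by
    refine Integrable.mono' (integrable_const (max |a| |b|)) hY.aestronglyMeasurable
      (ae_of_all _ fun z => ?_)
    rw [Real.norm_eq_abs, abs_le]
    constructor
    · exact le_trans (neg_le_neg (le_max_left |a| |b|)) (le_trans (neg_abs_le a) (hab z).1)
    · exact le_trans (hab z).2 (le_trans (le_abs_self b) (le_max_right |a| |b|))
  have hμmem : μY ∈ Set.Icc a b := by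
    constructor
    · have : a = ∫ _, a ∂ν := by simp
      rw [this]
      exact integral_mono (integrable_const a) hYint fun z => (hab z).1
    · have : b = ∫ _, b ∂ν := by simp
      rw [this]
      exact integral_mono hYint (integrable_const b) fun z => (hab z).2
  rcases eq_or_lt_of_le hle with heq | hlt
  · have hconst : ∀ z, Y z = a := fun z => le_antisymm (heq ▸ (hab z).2) (hab z).1
    have hμa : μY = a := by
      rw [hμY]
      simp only [hconst]
      simp
    simp only [hconst, hμa, sub_self, mul_zero, exp_zero]
    simp only [integral_const, measure_univ, ENNReal.toReal_one, probReal_univ, smul_eq_mul, mul_one, one_mul]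
    exact Real.one_le_exp (by positivity)
  · set q := (μY - a) / (b - a) with hq
    set x := s * (b - a) with hx
    have hba : (0:ℝ) < b - a := by linarith
    have hq0 : 0 ≤ q := div_nonneg (by linarith [hμmem.1]) hba.le
    have hq1 : q ≤ 1 := (div_le_one hba).mpr (by linarith [hμmem.2])
    have hbane : b - a ≠ 0 := hba.ne'
    have hchord : ∀ z, exp (s * (Y z - μY)) ≤
        exp (s * (a - μY)) / (b - a) * (b - Y z) + exp (s * (b - μY)) / (b - a) * (Y z - a) := by
      intro z
      have w1 : 0 ≤ (b - Y z) / (b - a) := div_nonneg (by linarith [(hab z).2]) hba.le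
      have w2 : 0 ≤ (Y z - a) / (b - a) := div_nonneg (by linarith [(hab z).1]) hba.le
      have wsum : (b - Y z) / (b - a) + (Y z - a) / (b - a) = 1 := by field_simp; ring
      have h1 := convexOn_exp.2 (Set.mem_univ (s * (a - μY))) (Set.mem_univ (s * (b - μY)))
        w1 w2 wsum
      simp only [smul_eq_mul] at h1
      have h2 : (b - Y z) / (b - a) * (s * (a - μY)) + (Y z - a) / (b - a) * (s * (b - μY))
          = s * (Y z - μY) := by
        field_simp
        ring
      rw [h2] at h1
      calc exp (s * (Y z - μY))
          ≤ (b - Y z) / (b - a) * exp (s * (a - μY)) + (Y z - a) / (b - a) * exp (s * (b - μY)) :=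
            h1
        _ = exp (s * (a - μY)) / (b - a) * (b - Y z) + exp (s * (b - μY)) / (b - a) * (Y z - a) :=
            by ring
    have hintL : Integrable (fun z => exp (s * (Y z - μY))) ν := by
      refine Integrable.mono' (integrable_const (exp (|s| * (b - a))))
        (((hY.sub_const μY).const_mul s).exp.aestronglyMeasurable) (ae_of_all _ fun z => ?_)
      rw [Real.norm_eq_abs, abs_exp]
      apply Real.exp_le_exp.mpr
      calc s * (Y z - μY) ≤ |s * (Y z - μY)| := le_abs_self _
        _ = |s| * |Y z - μY| := abs_mul _ _
        _ ≤ |s| * (b - a) := by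
            refine mul_le_mul_of_nonneg_left ?_ (abs_nonneg s)
            rw [abs_le]
            constructor
            · linarith [(hab z).1, hμmem.2]
            · linarith [(hab z).2, hμmem.1]
    have hint1 : Integrable (fun z => exp (s * (a - μY)) / (b - a) * (b - Y z)) ν :=
      ((integrable_const b).sub hYint).const_mul _
    have hint2 : Integrable (fun z => exp (s * (b - μY)) / (b - a) * (Y z - a)) ν :=
      (hYint.sub (integrable_const a)).const_mul _
    have hswap : ∀ u v : ℝ, u / (b - a) * v = v / (b - a) * u := fun u v => by ring
    calc ∫ z, exp (s * (Y z - μY)) ∂ν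
        ≤ ∫ z, (exp (s * (a - μY)) / (b - a) * (b - Y z)
            + exp (s * (b - μY)) / (b - a) * (Y z - a)) ∂ν :=
          integral_mono hintL (hint1.add hint2) hchord
      _ = exp (s * (a - μY)) / (b - a) * (b - μY) + exp (s * (b - μY)) / (b - a) * (μY - a) := by
          rw [integral_add hint1 hint2, integral_const_mul, integral_const_mul,
            integral_sub (integrable_const b) hYint, integral_sub hYint (integrable_const a)]
          simp [hμY]
      _ = (1 - q) * exp (-(q * x)) + q * exp ((1 - q) * x) := by
          have e1 : (b - μY) / (b - a) = 1 - q := by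
            rw [hq]; field_simp; ring
          have e2 : s * (a - μY) = -(q * x) := by
            rw [hq, hx]; field_simp; ring
          have e3 : s * (b - μY) = (1 - q) * x := by
            rw [hq, hx]; field_simp; ring
          rw [e2, e3, hq]
          field_simp
          ring
      _ ≤ exp (x ^ 2 / 8) := hoeff_point hq0 hq1 x
      _ = exp (s ^ 2 * (b - a) ^ 2 / 8) := by rw [hx]; ring_nf

end Hoeff

section Main
variable {𝒳 : Type*} [MeasurableSpace 𝒳]

/-- The `i`-th block injection `Fin (n/m) × Fin m → Fin n`. -/
def Jmap (m n : ℕ) : Fin (n / m) × Fin m → Fin n :=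
  fun p => Fin.castLE (Nat.div_mul_le_self n m) (finProdFinEquiv p)

lemma Jmap_inj (m n : ℕ) : Injective (Jmap m n) := fun a b hab =>
  finProdFinEquiv.injective (Fin.castLE_injective _ hab)

lemma measurable_ustat {m n : ℕ} {h : (Fin m → 𝒳) → ℝ} (hh : Measurable h) :
    Measurable (fun x : Fin n → 𝒳 => Ustat h x) := by
  unfold Ustat
  exact (Finset.measurable_sum Finset.univ fun ι _ =>
    hh.comp (measurable_pi_lambda _ fun j => measurable_pi_apply (ι j))).const_mul _

lemma ustat_bound {m n : ℕ} {h : (Fin m → 𝒳) → ℝ} {C : ℝ} (hC : ∀ y, |h y| ≤ C)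
    (x : Fin n → 𝒳) : |Ustat h x| ≤
      ((n - m).factorial : ℝ) / (n.factorial : ℝ) * (Fintype.card (Fin m ↪ Fin n)) * C := by
  unfold Ustat
  rw [abs_mul, abs_div, abs_of_nonneg (Nat.cast_nonneg _), abs_of_nonneg (Nat.cast_nonneg _),
    mul_assoc]
  refine mul_le_mul_of_nonneg_left ?_ (by positivity)
  calc |∑ ι : Fin m ↪ Fin n, h fun j => x (ι j)| ≤ ∑ ι : Fin m ↪ Fin n, |h fun j => x (ι j)| :=
        Finset.abs_sum_le_sum_abs _ _
    _ ≤ ∑ _ι : Fin m ↪ Fin n, C := Finset.sum_le_sum fun ι _ => hC _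
    _ = (Fintype.card (Fin m ↪ Fin n)) * C := by
        rw [Finset.sum_const, nsmul_eq_mul, Finset.card_univ]

lemma ustat_symm {m n : ℕ} (hm : 1 ≤ m) (hmn : m ≤ n) (h : (Fin m → 𝒳) → ℝ) (x : Fin n → 𝒳) :
    Ustat h x = (n.factorial : ℝ)⁻¹ * ∑ σ : Equiv.Perm (Fin n),
      ((n / m : ℕ) : ℝ)⁻¹ * ∑ i : Fin (n / m), h (fun j => x (σ (Jmap m n (i, j)))) := by
  have hk1 : 1 ≤ n / m := (Nat.one_le_div_iff (lt_of_lt_of_le one_pos hm)).mpr hmn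
  have hkne : ((n / m : ℕ) : ℝ) ≠ 0 := by
    exact_mod_cast Nat.one_le_iff_ne_zero.mp hk1
  have hfacne : ((n.factorial : ℕ) : ℝ) ≠ 0 := by
    exact_mod_cast n.factorial_ne_zero
  have hinner : ∀ i : Fin (n / m),
      ∑ σ : Equiv.Perm (Fin n), h (fun j => x (σ (Jmap m n (i, j)))) =
        ((n - m).factorial : ℝ) * ∑ ι : Fin m ↪ Fin n, h (fun j => x (ι j)) := by
    intro i
    have hei : Injective (fun j => Jmap m n (i, j)) := by
      intro a b hab
      have := Jmap_inj m n hab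
      simpa [Prod.ext_iff] using this
    exact sum_perm_comp ⟨fun j => Jmap m n (i, j), hei⟩ (fun v => h (fun j => x (v j)))
  have hswap : ∑ σ : Equiv.Perm (Fin n),
      ((n / m : ℕ) : ℝ)⁻¹ * ∑ i : Fin (n / m), h (fun j => x (σ (Jmap m n (i, j))))
      = ((n / m : ℕ) : ℝ)⁻¹ * ∑ i : Fin (n / m), ∑ σ : Equiv.Perm (Fin n),
          h (fun j => x (σ (Jmap m n (i, j)))) := by
    rw [← Finset.mul_sum]
    congr 1
    exact Finset.sum_comm
  rw [hswap]
  simp only [hinner]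
  rw [Finset.sum_const, Finset.card_univ, Fintype.card_fin, nsmul_eq_mul]
  unfold Ustat
  field_simp

lemma ustat_neg {m n : ℕ} (h : (Fin m → 𝒳) → ℝ) (x : Fin n → 𝒳) :
    Ustat (fun y => -(h y)) x = -(Ustat h x) := by
  simp [Ustat, mul_neg]

lemma bdd_integrable {α : Type*} [MeasurableSpace α] (ν : Measure α) [IsFiniteMeasure ν]
    {f : α → ℝ} (K : ℝ) (hf : Measurable f) (hK : ∀ x, |f x| ≤ K) : Integrable f ν :=
  Integrable.mono' (integrable_const K) hf.aestronglyMeasurable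
    (ae_of_all _ fun x => by rw [Real.norm_eq_abs]; exact hK x)

lemma one_sided (μ : Measure 𝒳) [IsProbabilityMeasure μ]
    {m n : ℕ} (hm : 1 ≤ m) (hmn : m ≤ n)
    (h : (Fin m → 𝒳) → ℝ) (hhmeas : Measurable h)
    (C : ℝ) (hCpos : 0 < C) (hC : ∀ y, |h y| ≤ C)
    (mh : ℝ) (hmh : mh = ∫ y, h y ∂(Measure.pi fun _ : Fin m => μ))
    (t : ℝ) (ht : 0 < t) :
    (Measure.pi fun _ : Fin n => μ) {x | t ≤ Ustat h x - mh}
      ≤ ENNReal.ofReal (Real.exp (-(t ^ 2 * ((n / m : ℕ) : ℝ)) / (2 * C ^ 2))) := by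
  classical
  have hk1 : 1 ≤ n / m := (Nat.one_le_div_iff (lt_of_lt_of_le one_pos hm)).mpr hmn
  have hkR : (0:ℝ) < ((n / m : ℕ) : ℝ) := by exact_mod_cast hk1
  have hfacne : ((n.factorial : ℕ) : ℝ) ≠ 0 := by exact_mod_cast n.factorial_ne_zero
  set k := n / m with hkdef
  set πn := (Measure.pi fun _ : Fin n => μ) with hπn
  set πm := (Measure.pi fun _ : Fin m => μ) with hπm
  set lam := t * k / C ^ 2 with hlam
  have hlam0 : 0 ≤ lam := by positivity
  set s := lam / k with hs
  set W : (Fin n → 𝒳) → ℝ :=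
    fun y => ((k : ℕ) : ℝ)⁻¹ * ∑ i : Fin k, h (fun j => y (Jmap m n (i, j))) with hW
  have hWmeas : Measurable W := by
    refine Measurable.const_mul ?_ _
    exact Finset.measurable_sum Finset.univ fun i _ =>
      hhmeas.comp (measurable_pi_lambda _ fun j => measurable_pi_apply _)
  have hWbdd : ∀ y, |W y| ≤ C := by
    intro y
    rw [hW]
    simp only []
    rw [abs_mul, abs_inv, Nat.abs_cast, inv_mul_le_iff₀ hkR]
    calc |∑ i : Fin k, h (fun j => y (Jmap m n (i, j)))|
        ≤ ∑ i : Fin k, |h (fun j => y (Jmap m n (i, j)))| := Finset.abs_sum_le_sum_abs _ _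
      _ ≤ ∑ _i : Fin k, C := Finset.sum_le_sum fun i _ => hC _
      _ = (k : ℝ) * C := by
          rw [Finset.sum_const, nsmul_eq_mul, Finset.card_univ, Fintype.card_fin]
  have hmhbdd : |mh| ≤ C := by
    rw [hmh]
    calc |∫ y, h y ∂πm| ≤ ∫ y, |h y| ∂πm := by
          have := norm_integral_le_integral_norm (μ := πm) h
          simpa [Real.norm_eq_abs] using this
      _ ≤ ∫ _y, C ∂πm := integral_mono (bdd_integrable πm C hhmeas hC).abs
          (integrable_const C) (fun y => by simpa using hC y)
      _ = C := by simp
  have hUmeas : Measurable (fun x : Fin n → 𝒳 => Ustat h x) := measurable_ustat hhmeas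
  set B : ℝ := ((n - m).factorial : ℝ) / (n.factorial : ℝ) * (Fintype.card (Fin m ↪ Fin n)) * C
    with hB
  have hUbdd : ∀ x, |Ustat h x - mh| ≤ B + C := fun x =>
    (abs_sub _ _).trans (add_le_add (ustat_bound hC x) hmhbdd)
  have int1 : Integrable (fun x => exp (lam * (Ustat h x - mh))) πn := by
    refine bdd_integrable πn (exp (lam * (B + C))) (((hUmeas.sub_const mh).const_mul lam).exp)
      (fun x => ?_)
    rw [abs_exp]
    refine Real.exp_le_exp.mpr (mul_le_mul_of_nonneg_left ?_ hlam0)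
    exact le_trans (le_abs_self _) (hUbdd x)
  -- permutation invariance
  have hperm : ∀ σ : Equiv.Perm (Fin n),
      ∫ x, exp (lam * (W (fun a => x (σ a)) - mh)) ∂πn
        = ∫ x, exp (lam * (W x - mh)) ∂πn := by
    intro σ
    have hg : Measurable (fun y : Fin n → 𝒳 => exp (lam * (W y - mh))) :=
      ((hWmeas.sub_const mh).const_mul lam).exp
    have hmap := map_pi_comp μ (⇑σ) σ.injective (β := Fin n)
    rw [← hπn] at hmap
    conv_rhs => rw [← hmap]
    rw [integral_map (measurable_pi_lambda _ fun a =>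
      measurable_pi_apply (σ a)).aemeasurable hg.aestronglyMeasurable]
  -- block factorization
  have hblock : ∫ x, exp (lam * (W x - mh)) ∂πn
      = (∫ y, exp (s * (h y - mh)) ∂πm) ^ k := by
    have hpt : ∀ x : Fin n → 𝒳, exp (lam * (W x - mh)) =
        ∏ i : Fin k, exp (s * (h (fun j => x (Jmap m n (i, j))) - mh)) := by
      intro x
      rw [← Real.exp_sum]
      congr 1
      rw [hW]
      simp only [mul_sub]
      rw [Finset.sum_sub_distrib, ← Finset.mul_sum, Finset.sum_const, Finset.card_univ,
        Fintype.card_fin, nsmul_eq_mul, hs, hlam]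
      field_simp
    simp only [hpt]
    exact block_prod μ (fun y => exp (s * (h y - mh))) k (Fin n) (Jmap m n) (Jmap_inj m n)
  -- Hoeffding lemma for one block
  have hFhoeff : ∫ y, exp (s * (h y - mh)) ∂πm ≤ exp (s ^ 2 * C ^ 2 / 2) := by
    have hicc : ∀ z : Fin m → 𝒳, h z ∈ Set.Icc (-C) C := fun z => Set.mem_Icc.mpr (abs_le.mp (hC z))
    have h1 := hoeff_mgf πm h hhmeas (-C) C hicc s
    rw [← hmh] at h1
    calc ∫ y, exp (s * (h y - mh)) ∂πm ≤ exp (s ^ 2 * (C - -C) ^ 2 / 8) := h1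
      _ = exp (s ^ 2 * C ^ 2 / 2) := by congr 1; ring
  have hFnonneg : 0 ≤ ∫ y, exp (s * (h y - mh)) ∂πm := integral_nonneg fun y => (exp_pos _).le
  -- convexity (symmetrization)
  have hsum1 : ∑ _σ : Equiv.Perm (Fin n), ((n.factorial : ℕ) : ℝ)⁻¹ = 1 := by
    rw [Finset.sum_const, Finset.card_univ, Fintype.card_perm, Fintype.card_fin, nsmul_eq_mul,
      mul_inv_cancel₀ hfacne]
  have pw : ∀ x, exp (lam * (Ustat h x - mh)) ≤
      ∑ σ : Equiv.Perm (Fin n),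
        ((n.factorial : ℕ) : ℝ)⁻¹ * exp (lam * (W (fun a => x (σ a)) - mh)) := by
    intro x
    have harg : lam * (Ustat h x - mh)
        = ∑ σ : Equiv.Perm (Fin n),
            ((n.factorial : ℕ) : ℝ)⁻¹ • (lam * (W (fun a => x (σ a)) - mh)) := by
      simp only [smul_eq_mul]
      have hre : ∀ σ : Equiv.Perm (Fin n),
          ((n.factorial : ℕ) : ℝ)⁻¹ * (lam * (W (fun a => x (σ a)) - mh))
            = lam * ((n.factorial : ℕ) : ℝ)⁻¹ * W (fun a => x (σ a))
              - ((n.factorial : ℕ) : ℝ)⁻¹ * (lam * mh) := by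
        intro σ; ring
      have hsplit : ∑ σ : Equiv.Perm (Fin n),
          ((n.factorial : ℕ) : ℝ)⁻¹ * (lam * (W (fun a => x (σ a)) - mh))
          = lam * ((n.factorial : ℕ) : ℝ)⁻¹ *
              (∑ σ : Equiv.Perm (Fin n), W (fun a => x (σ a))) - lam * mh := by
        simp only [hre]
        rw [Finset.sum_sub_distrib, ← Finset.mul_sum, Finset.sum_const, Finset.card_univ,
          Fintype.card_perm, Fintype.card_fin, nsmul_eq_mul,
          show ((n.factorial : ℕ) : ℝ) * (((n.factorial : ℕ) : ℝ)⁻¹ * (lam * mh)) = lam * mh by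
            rw [← mul_assoc, mul_inv_cancel₀ hfacne, one_mul]]
      rw [hsplit, ustat_symm hm hmn h x]
      simp only [hW]
      ring
    rw [harg]
    have hconv := convexOn_exp.map_sum_le
      (t := Finset.univ)
      (w := fun _ : Equiv.Perm (Fin n) => ((n.factorial : ℕ) : ℝ)⁻¹)
      (p := fun σ : Equiv.Perm (Fin n) => lam * (W (fun a => x (σ a)) - mh))
      (fun _ _ => inv_nonneg.mpr (Nat.cast_nonneg _)) hsum1 (fun _ _ => Set.mem_univ _)
    simpa using hconv
  have intσ : ∀ σ : Equiv.Perm (Fin n),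
      Integrable (fun x => exp (lam * (W (fun a => x (σ a)) - mh))) πn := by
    intro σ
    have hpre : Measurable (fun (x : Fin n → 𝒳) (a : Fin n) => x (σ a)) :=
      measurable_pi_lambda _ fun a => measurable_pi_apply (σ a)
    have hcomp : Measurable (fun x : Fin n → 𝒳 => W (fun a => x (σ a))) := hWmeas.comp hpre
    refine bdd_integrable πn (exp (lam * (C + C))) ?_ (fun x => ?_)
    · exact ((hcomp.sub_const mh).const_mul lam).exp
    · rw [abs_exp]
      refine Real.exp_le_exp.mpr (mul_le_mul_of_nonneg_left ?_ hlam0)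
      have := hWbdd (fun a => x (σ a))
      have h2 := abs_le.mp this
      linarith [abs_le.mp hmhbdd]
  have int2 : Integrable (fun x => ∑ σ : Equiv.Perm (Fin n),
      ((n.factorial : ℕ) : ℝ)⁻¹ * exp (lam * (W (fun a => x (σ a)) - mh))) πn :=
    integrable_finset_sum _ fun σ _ => (intσ σ).const_mul _
  -- the mgf bound
  have hmgf : mgf (fun x => Ustat h x - mh) πn lam ≤ exp (lam ^ 2 * C ^ 2 / (2 * k)) := by
    have hmgfeq : mgf (fun x => Ustat h x - mh) πn lam
        = ∫ x, exp (lam * (Ustat h x - mh)) ∂πn := rfl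
    rw [hmgfeq]
    calc ∫ x, exp (lam * (Ustat h x - mh)) ∂πn
        ≤ ∫ x, (∑ σ : Equiv.Perm (Fin n),
            ((n.factorial : ℕ) : ℝ)⁻¹ * exp (lam * (W (fun a => x (σ a)) - mh))) ∂πn :=
          integral_mono int1 int2 pw
      _ = ∑ σ : Equiv.Perm (Fin n),
            ((n.factorial : ℕ) : ℝ)⁻¹ * ∫ x, exp (lam * (W (fun a => x (σ a)) - mh)) ∂πn := by
          rw [integral_finset_sum _ fun σ _ => (intσ σ).const_mul _]
          exact Finset.sum_congr rfl fun σ _ => integral_const_mul _ _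
      _ = ∑ _σ : Equiv.Perm (Fin n),
            ((n.factorial : ℕ) : ℝ)⁻¹ * (∫ y, exp (s * (h y - mh)) ∂πm) ^ k := by
          refine Finset.sum_congr rfl fun σ _ => ?_
          rw [hperm σ, hblock]
      _ = (∫ y, exp (s * (h y - mh)) ∂πm) ^ k := by
          rw [← Finset.sum_mul, hsum1, one_mul]
      _ ≤ (exp (s ^ 2 * C ^ 2 / 2)) ^ k := pow_le_pow_left₀ hFnonneg hFhoeff k
      _ = exp (lam ^ 2 * C ^ 2 / (2 * k)) := by
          rw [← Real.exp_nat_mul]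
          congr 1
          rw [hs]
          field_simp
  -- Chernoff
  have cher := measure_ge_le_exp_mul_mgf (μ := πn) (X := fun x => Ustat h x - mh) t hlam0 int1
  have hfinal : (πn {x | t ≤ Ustat h x - mh}).toReal
      ≤ exp (-(t ^ 2 * (k : ℝ)) / (2 * C ^ 2)) := by
    calc (πn {x | t ≤ Ustat h x - mh}).toReal
        ≤ exp (-lam * t) * mgf (fun x => Ustat h x - mh) πn lam := cher
      _ ≤ exp (-lam * t) * exp (lam ^ 2 * C ^ 2 / (2 * k)) :=
          mul_le_mul_of_nonneg_left hmgf (exp_pos _).le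
      _ = exp (-(t ^ 2 * (k : ℝ)) / (2 * C ^ 2)) := by
          rw [← Real.exp_add]
          congr 1
          rw [hlam]
          field_simp
          ring
  rw [← ENNReal.ofReal_toReal (measure_ne_top πn _)]
  exact ENNReal.ofReal_le_ofReal hfinal

end Main

lemma joint_law {Ω : Type*} [MeasureSpace Ω] [IsProbabilityMeasure (ℙ : Measure Ω)]
    {𝒳 : Type*} [MeasurableSpace 𝒳] {n : ℕ} (hn : 0 < n)
    (X : Fin n → Ω → 𝒳) (hXmeas : ∀ i, Measurable (X i))
    (hIndep : iIndepFun X ℙ)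
    (hid : ∀ i j, IdentDistrib (X i) (X j) ℙ ℙ) :
    (ℙ : Measure Ω).map (fun ω (i : Fin n) => X i ω) = Measure.pi (fun _ : Fin n => (ℙ : Measure Ω).map (X ⟨0, hn⟩)) := by
  haveI : IsProbabilityMeasure ((ℙ : Measure Ω).map (X ⟨0, hn⟩)) :=
    Measure.isProbabilityMeasure_map (hXmeas _).aemeasurable
  refine (Measure.pi_eq (μ := fun _ : Fin n => (ℙ : Measure Ω).map (X ⟨0, hn⟩))
    fun s hs => ?_).symm
  rw [Measure.map_apply (measurable_pi_lambda _ fun i => hXmeas i) (MeasurableSet.univ_pi hs)]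
  have hset : (fun ω (i : Fin n) => X i ω) ⁻¹' Set.pi Set.univ s
      = ⋂ i ∈ Finset.univ, X i ⁻¹' s i := by
    ext ω; simp
  rw [hset, (iIndepFun_iff_measure_inter_preimage_eq_mul.mp hIndep) Finset.univ (fun i _ => hs i)]
  refine Finset.prod_congr rfl fun i _ => ?_
  rw [← Measure.map_apply (hXmeas i) (hs i), (hid i ⟨0, hn⟩).map_eq]

theorem ustat_hoeffding_two_sided
    {Ω : Type*} [MeasureSpace Ω] [IsProbabilityMeasure (ℙ : Measure Ω)]
    {𝒳 : Type*} [MeasurableSpace 𝒳] {m n : ℕ} (hm : 2 ≤ m) (hmn : m ≤ n)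
    (X : Fin n → Ω → 𝒳) (hXmeas : ∀ i, Measurable (X i))
    (hIndep : iIndepFun X ℙ)
    (hid : ∀ i j, IdentDistrib (X i) (X j) ℙ ℙ)
    (h : (Fin m → 𝒳) → ℝ) (hhmeas : Measurable h)
    (C : ℝ) (hC : ∀ x, |h x| ≤ C)
    (mh : ℝ) (hmh : mh = ∫ ω, h (fun j => X (Fin.castLE hmn j) ω) ∂ℙ)
    (t : ℝ) (ht : 0 < t) :
    ℙ {ω | t ≤ |Ustat h (fun i => X i ω) - mh|} ≤
      ENNReal.ofReal (2 * Real.exp (-(t ^ 2 * ((n / m : ℕ) : ℝ)) / (2 * C ^ 2))) := by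
  classical
  have hm1 : 1 ≤ m := le_trans one_le_two hm
  have hn : 0 < n := lt_of_lt_of_le (lt_of_lt_of_le two_pos hm) hmn
  set i₀ : Fin n := ⟨0, hn⟩ with hi₀
  set μ := (ℙ : Measure Ω).map (X i₀) with hμ
  haveI : IsProbabilityMeasure μ := by
    rw [hμ]
    exact Measure.isProbabilityMeasure_map (hXmeas i₀).aemeasurable
  have hT : Measurable (fun ω (i : Fin n) => X i ω) := measurable_pi_lambda _ hXmeas
  have hmap : (ℙ : Measure Ω).map (fun ω (i : Fin n) => X i ω) = Measure.pi (fun _ : Fin n => μ) := joint_law hn X hXmeas hIndep hid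
  have hΩ : Nonempty Ω := by
    by_contra hc
    rw [not_nonempty_iff] at hc
    have h1 : (ℙ : Measure Ω) Set.univ = 1 := measure_univ
    rw [Set.univ_eq_empty_iff.mpr hc, measure_empty] at h1
    exact zero_ne_one h1
  obtain ⟨ω₀⟩ := hΩ
  have hC0 : 0 ≤ C := le_trans (abs_nonneg _) (hC (fun _ => X i₀ ω₀))
  rcases eq_or_lt_of_le hC0 with hCeq | hCpos
  · have hzero : ∀ y, h y = 0 := fun y =>
      abs_eq_zero.mp (le_antisymm (hCeq ▸ hC y) (abs_nonneg _))
    have hmh0 : mh = 0 := by rw [hmh]; simp [hzero]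
    have hempty : {ω | t ≤ |Ustat h (fun i => X i ω) - mh|} = ∅ := by
      ext ω
      simp only [Set.mem_setOf_eq, Set.mem_empty_iff_false, iff_false, not_le]
      have : Ustat h (fun i => X i ω) = 0 := by simp [Ustat, hzero]
      rw [this, hmh0]
      simpa using ht
    rw [hempty]
    simp
  · have hmh2 : mh = ∫ y, h y ∂(Measure.pi (fun _ : Fin m => μ)) := by
      rw [hmh]
      have hG : Measurable (fun x : Fin n → 𝒳 => h (fun j => x (Fin.castLE hmn j))) :=
        hhmeas.comp (measurable_pi_lambda _ fun j => measurable_pi_apply _)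
      have e1 : ∫ ω, h (fun j => X (Fin.castLE hmn j) ω) ∂ℙ
          = ∫ x, h (fun j => x (Fin.castLE hmn j)) ∂(Measure.pi (fun _ : Fin n => μ)) := by
        rw [← hmap, integral_map hT.aemeasurable hG.aestronglyMeasurable]
      rw [e1, ← map_pi_comp μ (Fin.castLE hmn) (Fin.castLE_injective hmn),
        integral_map (measurable_pi_lambda _ fun a => measurable_pi_apply _).aemeasurable
          hhmeas.aestronglyMeasurable]
    have hA : MeasurableSet {x : Fin n → 𝒳 | t ≤ Ustat h x - mh} :=
      measurableSet_le measurable_const ((measurable_ustat hhmeas).sub_const mh)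
    have hAneg : MeasurableSet {x : Fin n → 𝒳 | t ≤ Ustat (fun y => -(h y)) x - (-mh)} :=
      measurableSet_le measurable_const ((measurable_ustat hhmeas.neg).sub_const _)
    have hsub : {ω | t ≤ |Ustat h (fun i => X i ω) - mh|} ⊆
        (fun ω (i : Fin n) => X i ω) ⁻¹' ({x | t ≤ Ustat h x - mh}
          ∪ {x | t ≤ Ustat (fun y => -(h y)) x - (-mh)}) := by
      intro ω hω
      simp only [Set.mem_setOf_eq] at hω
      rcases le_abs.mp hω with h1 | h1
      · exact Or.inl h1
      · right
        show t ≤ Ustat (fun y => -(h y)) (fun i => X i ω) - (-mh)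
        rw [ustat_neg]
        linarith
    calc ℙ {ω | t ≤ |Ustat h (fun i => X i ω) - mh|}
        ≤ ℙ ((fun ω (i : Fin n) => X i ω) ⁻¹' ({x | t ≤ Ustat h x - mh}
            ∪ {x | t ≤ Ustat (fun y => -(h y)) x - (-mh)})) := measure_mono hsub
      _ = (Measure.pi (fun _ : Fin n => μ)) ({x | t ≤ Ustat h x - mh} ∪ {x | t ≤ Ustat (fun y => -(h y)) x - (-mh)}) := by
          rw [← Measure.map_apply hT (hA.union hAneg), hmap]
      _ ≤ (Measure.pi (fun _ : Fin n => μ)) {x | t ≤ Ustat h x - mh}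
          + (Measure.pi (fun _ : Fin n => μ)) {x | t ≤ Ustat (fun y => -(h y)) x - (-mh)} :=
          measure_union_le _ _
      _ ≤ ENNReal.ofReal (Real.exp (-(t ^ 2 * ((n / m : ℕ) : ℝ)) / (2 * C ^ 2)))
          + ENNReal.ofReal (Real.exp (-(t ^ 2 * ((n / m : ℕ) : ℝ)) / (2 * C ^ 2))) := by
          refine add_le_add ?_ ?_
          · exact one_sided μ hm1 hmn h hhmeas C hCpos hC mh hmh2 t ht
          · refine one_sided μ hm1 hmn (fun y => -(h y)) hhmeas.neg C hCpos
              (fun y => by simpa [abs_neg] using hC y) (-mh) ?_ t ht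
            rw [hmh2, integral_neg]
      _ = ENNReal.ofReal (2 * Real.exp (-(t ^ 2 * ((n / m : ℕ) : ℝ)) / (2 * C ^ 2))) := by
          rw [← ENNReal.ofReal_add (exp_pos _).le (exp_pos _).le, ← two_mul]
end

section
/- (Hoeffding's Inequality) Let $X_1,\ldots,X_n$ be independent real-valued random variables such that $E(X_i)=\mu$ for all $i$ and $X_i\in[a,b]$ almost surely. Let $\bar{X}_n=\frac{1}{n}\sum_{i=1}^n X_i$. Then for any $\epsilon>0$, $P(|\bar{X}_n-\mu|\geq\epsilon)\leq 2e^{-2n\epsilon^2/(b-a)^2}$. -/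
open MeasureTheory ProbabilityTheory Real

lemma hoeffding_key {p : ℝ} (hp0 : 0 ≤ p) (hp1 : p ≤ 1) (h : ℝ) :
    -p * h + Real.log (1 - p + p * Real.exp h) ≤ h ^ 2 / 8 := by
  set f : ℝ → ℝ := fun x => 1 - p + p * Real.exp x with hf_def
  have hf_pos : ∀ x, 0 < f x := by
    intro x
    rcases lt_or_eq_of_le hp1 with h1 | h1
    · have := Real.exp_pos x
      have : 0 ≤ p * Real.exp x := mul_nonneg hp0 (Real.exp_pos x).le
      simp only [hf_def]; nlinarith
    · subst h1
      simp only [hf_def]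
      simpa using Real.exp_pos x
  have hf_deriv : ∀ x, HasDerivAt f (p * Real.exp x) x := by
    intro x
    exact ((Real.hasDerivAt_exp x).const_mul p).const_add (1 - p)
  set L' : ℝ → ℝ := fun x => -p + p * Real.exp x / f x with hL'_def
  have hL_deriv : ∀ x, HasDerivAt (fun y => -p * y + Real.log (f y)) (L' x) x := by
    intro x
    have h1 : HasDerivAt (fun y : ℝ => -p * y) (-p) x := by
      simpa using (hasDerivAt_id x).const_mul (-p)
    have h2 : HasDerivAt (fun y => Real.log (f y)) (p * Real.exp x / f x) x :=
      (hf_deriv x).log (hf_pos x).ne'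
    exact h1.add h2
  set g : ℝ → ℝ := fun x => x ^ 2 / 8 - (-p * x + Real.log (f x)) with hg_def
  set g' : ℝ → ℝ := fun x => x / 4 - L' x with hg'_def
  have hg_deriv : ∀ x, HasDerivAt g (g' x) x := by
    intro x
    have h1 : HasDerivAt (fun y : ℝ => y ^ 2 / 8) (x / 4) x := by
      have h0 := (hasDerivAt_pow 2 x).div_const 8
      refine h0.congr_deriv ?_
      norm_num
      ring
    exact h1.sub (hL_deriv x)
  have hg'_deriv : ∀ x, HasDerivAt g'
      (1 / 4 - (p * Real.exp x * f x - p * Real.exp x * (p * Real.exp x)) / (f x) ^ 2) x := by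
    intro x
    have h1 : HasDerivAt (fun y : ℝ => y / 4) (1 / 4) x := by
      simpa using (hasDerivAt_id x).div_const 4
    have h2 : HasDerivAt (fun y => p * Real.exp y / f y)
        ((p * Real.exp x * f x - p * Real.exp x * (p * Real.exp x)) / (f x) ^ 2) x :=
      ((Real.hasDerivAt_exp x).const_mul p).div (hf_deriv x) (hf_pos x).ne'
    have h3 : HasDerivAt L'
        ((p * Real.exp x * f x - p * Real.exp x * (p * Real.exp x)) / (f x) ^ 2) x := by
      simpa [hL'_def] using h2.const_add (-p)
    exact h1.sub h3
  have hg'_mono : Monotone g' := by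
    apply monotone_of_deriv_nonneg
    · exact fun x => (hg'_deriv x).differentiableAt
    · intro x
      rw [(hg'_deriv x).deriv]
      have hfx := hf_pos x
      have hex := Real.exp_pos x
      rw [sub_nonneg, div_le_iff₀ (by positivity)]
      have key : p * Real.exp x * f x - p * Real.exp x * (p * Real.exp x)
          = (p * Real.exp x) * (1 - p) := by simp only [hf_def]; ring
      rw [key]
      nlinarith [sq_nonneg ((1 - p) - p * Real.exp x), hf_pos x]
  have hg'0 : g' 0 = 0 := by
    simp only [hg'_def, hL'_def, hf_def, Real.exp_zero, mul_one]
    field_simp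
    ring
  have hg0 : g 0 = 0 := by
    simp [hg_def, hf_def]
  have hgnonneg : 0 ≤ g h := by
    rcases le_total 0 h with hh | hh
    · have hmono : MonotoneOn g (Set.Ici 0) := by
        apply monotoneOn_of_deriv_nonneg (convex_Ici 0)
        · exact fun x _ => (hg_deriv x).differentiableAt.continuousAt.continuousWithinAt
        · exact fun x _ => ((hg_deriv x).differentiableAt).differentiableWithinAt
        · intro x hx
          rw [(hg_deriv x).deriv, ← hg'0]
          exact hg'_mono (le_of_lt (by simpa using hx))
      have := hmono (Set.self_mem_Ici) (Set.mem_Ici.2 hh) hh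
      rwa [hg0] at this
    · have hanti : AntitoneOn g (Set.Iic 0) := by
        apply antitoneOn_of_deriv_nonpos (convex_Iic 0)
        · exact fun x _ => (hg_deriv x).differentiableAt.continuousAt.continuousWithinAt
        · exact fun x _ => ((hg_deriv x).differentiableAt).differentiableWithinAt
        · intro x hx
          rw [(hg_deriv x).deriv, ← hg'0]
          exact hg'_mono (le_of_lt (by simpa using hx))
      have := hanti (Set.mem_Iic.2 hh) (Set.self_mem_Iic) hh
      rwa [hg0] at this
  simp only [hg_def, hf_def] at hgnonneg
  linarith


lemma integrable_exp_mul_of_mem_Icc {Ω : Type*} [MeasureSpace Ω]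
    [IsProbabilityMeasure (ℙ : Measure Ω)] {Y : Ω → ℝ} (hY : Measurable Y) {a b : ℝ}
    (hmem : ∀ᵐ ω, Y ω ∈ Set.Icc a b) (t : ℝ) :
    Integrable (fun ω => Real.exp (t * Y ω)) := by
  apply Integrable.mono' (integrable_const (max (Real.exp (t * a)) (Real.exp (t * b))))
    ((hY.const_mul t).exp.aestronglyMeasurable)
  filter_upwards [hmem] with ω hω
  rw [Real.norm_eq_abs, abs_of_pos (Real.exp_pos _)]
  rcases le_total 0 t with ht | ht
  · exact le_max_of_le_right (Real.exp_le_exp.2 (mul_le_mul_of_nonneg_left hω.2 ht))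
  · exact le_max_of_le_left (Real.exp_le_exp.2 (mul_le_mul_of_nonpos_left hω.1 ht))

lemma integrable_of_mem_Icc {Ω : Type*} [MeasureSpace Ω]
    [IsProbabilityMeasure (ℙ : Measure Ω)] {Y : Ω → ℝ} (hY : Measurable Y) {a b : ℝ}
    (hmem : ∀ᵐ ω, Y ω ∈ Set.Icc a b) : Integrable Y := by
  apply Integrable.mono' (integrable_const (max |a| |b|)) hY.aestronglyMeasurable
  filter_upwards [hmem] with ω hω
  exact (Real.norm_eq_abs _) ▸ abs_le_max_abs_abs hω.1 hω.2

lemma mgf_le_of_mem_Icc {Ω : Type*} [MeasureSpace Ω]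
    [IsProbabilityMeasure (ℙ : Measure Ω)] {Y : Ω → ℝ} (hY : Measurable Y) {a b : ℝ}
    (hab : a < b) (hmem : ∀ᵐ ω, Y ω ∈ Set.Icc a b) (hmean : ∫ ω, Y ω = 0) (t : ℝ) :
    mgf Y ℙ t ≤ Real.exp (t ^ 2 * (b - a) ^ 2 / 8) := by
  have hba : (0:ℝ) < b - a := by linarith
  have hYint : Integrable Y := integrable_of_mem_Icc hY hmem
  have ha0 : a ≤ 0 := by
    have h1 := integral_mono_ae (integrable_const a) hYint (hmem.mono fun ω h => h.1)
    simpa [hmean] using h1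
  have hb0 : 0 ≤ b := by
    have h1 := integral_mono_ae hYint (integrable_const b) (hmem.mono fun ω h => h.2)
    simpa [hmean] using h1
  set p : ℝ := -a / (b - a) with hp_def
  have hp0 : 0 ≤ p := div_nonneg (by linarith) hba.le
  have hp1 : p ≤ 1 := by rw [hp_def, div_le_one hba]; linarith
  set c1 : ℝ := (Real.exp (t * b) - Real.exp (t * a)) / (b - a) with hc1_def
  set c2 : ℝ := (b * Real.exp (t * a) - a * Real.exp (t * b)) / (b - a) with hc2_def
  have hpt : ∀ᵐ ω, Real.exp (t * Y ω) ≤ c1 * Y ω + c2 := by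
    filter_upwards [hmem] with ω hω
    set y := Y ω with hy
    have hl1 : 0 ≤ (b - y) / (b - a) := div_nonneg (by linarith [hω.2]) hba.le
    have hl2 : 0 ≤ (y - a) / (b - a) := div_nonneg (by linarith [hω.1]) hba.le
    have hsum : (b - y) / (b - a) + (y - a) / (b - a) = 1 := by field_simp; ring
    have hconv := convexOn_exp.2 (Set.mem_univ (t * a)) (Set.mem_univ (t * b)) hl1 hl2 hsum
    simp only [smul_eq_mul] at hconv
    have hcombo : (b - y) / (b - a) * (t * a) + (y - a) / (b - a) * (t * b) = t * y := by
      field_simp; ring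
    rw [hcombo] at hconv
    refine hconv.trans (le_of_eq ?_)
    rw [hc1_def, hc2_def]
    field_simp
    ring
  have hint_exp := integrable_exp_mul_of_mem_Icc hY hmem t
  have h1 : mgf Y ℙ t ≤ ∫ ω, (c1 * Y ω + c2) := by
    exact integral_mono_ae hint_exp ((hYint.const_mul c1).add (integrable_const c2)) hpt
  have h2 : ∫ ω, (c1 * Y ω + c2) = c2 := by
    rw [integral_add (hYint.const_mul c1) (integrable_const c2), MeasureTheory.integral_const_mul, hmean,
      integral_const]
    simp
  rw [h2] at h1
  refine h1.trans ?_
  set h := t * (b - a) with hh_def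
  have hfpos : 0 < 1 - p + p * Real.exp h := by
    rcases eq_or_lt_of_le hp1 with h1' | h1'
    · rw [h1']; simpa using Real.exp_pos h
    · nlinarith [mul_nonneg hp0 (Real.exp_pos h).le]
  have hea : Real.exp (-p * h) = Real.exp (t * a) := by
    congr 1; rw [hp_def, hh_def]; field_simp
  have heb : Real.exp h * Real.exp (-p * h) = Real.exp (t * b) := by
    rw [← Real.exp_add]; congr 1; rw [hp_def, hh_def]; field_simp; ring
  have hc2eq : c2 = (1 - p + p * Real.exp h) * Real.exp (-p * h) := by
    have expand : (1 - p + p * Real.exp h) * Real.exp (-p * h)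
        = (1 - p) * Real.exp (-p * h) + p * (Real.exp h * Real.exp (-p * h)) := by ring
    rw [expand, heb, hea, hc2_def, hp_def]
    field_simp
    ring
  have hkey := hoeffding_key hp0 hp1 h
  have : c2 = Real.exp (-p * h + Real.log (1 - p + p * Real.exp h)) := by
    rw [Real.exp_add, Real.exp_log hfpos, hc2eq]; ring
  rw [this]
  apply Real.exp_le_exp.2
  refine hkey.trans (le_of_eq ?_)
  rw [hh_def]; ring

theorem hoeffding_inequality
    {Ω : Type*} [MeasureSpace Ω] [IsProbabilityMeasure (ℙ : Measure Ω)]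
    {n : ℕ} (X : Fin n → Ω → ℝ) (hXmeas : ∀ i, Measurable (X i))
    (hIndep : iIndepFun X ℙ)
    (a b μ : ℝ) (hab : ∀ i, ∀ᵐ ω, X i ω ∈ Set.Icc a b)
    (hmean : ∀ i, ∫ ω, X i ω = μ)
    (ε : ℝ) (hε : 0 < ε) :
    ℙ {ω | ε ≤ |(∑ i, X i ω) / n - μ|} ≤
      ENNReal.ofReal (2 * Real.exp (-2 * n * ε ^ 2 / (b - a) ^ 2)) := by
  by_cases hdeg : n = 0 ∨ b = a
  · have hexp : -2 * (n:ℝ) * ε ^ 2 / (b - a) ^ 2 = 0 := by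
      rcases hdeg with h | h
      · simp [h]
      · simp [h]
    rw [hexp, Real.exp_zero, mul_one]
    exact le_trans prob_le_one (ENNReal.one_le_ofReal.2 one_le_two)
  push_neg at hdeg
  obtain ⟨hn, hba'⟩ := hdeg
  have hn' : 0 < n := Nat.pos_of_ne_zero hn
  have hale : a ≤ b := by
    obtain ⟨ω, hω⟩ := (hab ⟨0, hn'⟩).exists
    exact hω.1.trans hω.2
  have hab' : a < b := lt_of_le_of_ne hale (Ne.symm hba')
  have hba : (0:ℝ) < b - a := sub_pos.2 hab'
  have hbne : b - a ≠ 0 := hba.ne'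
  set Y : Fin n → Ω → ℝ := fun i ω => X i ω - μ with hY_def
  have hYmeas : ∀ i, Measurable (Y i) := fun i => (hXmeas i).sub measurable_const
  have hYindep : iIndepFun Y ℙ :=
    hIndep.comp (fun _ => fun x => x - μ) (fun _ => measurable_id.sub measurable_const)
  have hYmem : ∀ i, ∀ᵐ ω, Y i ω ∈ Set.Icc (a - μ) (b - μ) := fun i =>
    (hab i).mono fun ω h => ⟨sub_le_sub_right h.1 μ, sub_le_sub_right h.2 μ⟩
  have hXint : ∀ i, Integrable (X i) := fun i => integrable_of_mem_Icc (hXmeas i) (hab i)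
  have hYmean : ∀ i, ∫ ω, Y i ω = 0 := fun i => by
    simp only [hY_def]
    rw [integral_sub (hXint i) (integrable_const μ), hmean i, integral_const]
    simp
  have hwidth : (b - μ) - (a - μ) = b - a := by ring
  have hmgf : ∀ i (t : ℝ), mgf (Y i) ℙ t ≤ Real.exp (t ^ 2 * (b - a) ^ 2 / 8) := fun i t => by
    have h1 := mgf_le_of_mem_Icc (hYmeas i) (by linarith : a - μ < b - μ) (hYmem i)
      (hYmean i) t
    rwa [hwidth] at h1
  have hint : ∀ (t : ℝ), ∀ i ∈ Finset.univ, Integrable (fun ω => Real.exp (t * Y i ω)) :=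
    fun t i _ => integrable_exp_mul_of_mem_Icc (hYmeas i) (hYmem i) t
  set t₀ : ℝ := 4 * ε / (b - a) ^ 2 with ht₀_def
  have ht₀ : 0 < t₀ := by positivity
  have hint_sum : ∀ t : ℝ, Integrable (fun ω => Real.exp (t * (∑ i, Y i) ω)) := fun t =>
    hYindep.integrable_exp_mul_sum hYmeas (hint t)
  have hmgf_sum : ∀ t : ℝ, mgf (∑ i, Y i) ℙ t
      ≤ Real.exp ((n:ℝ) * (t ^ 2 * (b - a) ^ 2 / 8)) := fun t => by
    rw [hYindep.mgf_sum hYmeas Finset.univ]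
    calc ∏ i, mgf (Y i) ℙ t ≤ ∏ _i : Fin n, Real.exp (t ^ 2 * (b - a) ^ 2 / 8) :=
          Finset.prod_le_prod (fun i _ => mgf_nonneg) (fun i _ => hmgf i t)
      _ = Real.exp ((n:ℝ) * (t ^ 2 * (b - a) ^ 2 / 8)) := by
          rw [Finset.prod_const, Finset.card_univ, Fintype.card_fin, ← Real.exp_nat_mul]
  have hup : (ℙ {ω | (n:ℝ) * ε ≤ (∑ i, Y i) ω}).toReal
      ≤ Real.exp (-2 * n * ε ^ 2 / (b - a) ^ 2) := by
    refine (measure_ge_le_exp_mul_mgf ((n:ℝ) * ε) ht₀.le (hint_sum t₀)).trans ?_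
    calc Real.exp (-t₀ * ((n:ℝ) * ε)) * mgf (∑ i, Y i) ℙ t₀
        ≤ Real.exp (-t₀ * ((n:ℝ) * ε)) * Real.exp ((n:ℝ) * (t₀ ^ 2 * (b - a) ^ 2 / 8)) :=
          mul_le_mul_of_nonneg_left (hmgf_sum t₀) (Real.exp_pos _).le
      _ = Real.exp (-2 * n * ε ^ 2 / (b - a) ^ 2) := by
          rw [← Real.exp_add]
          congr 1
          rw [ht₀_def]
          field_simp
          ring
  have hlo : (ℙ {ω | (∑ i, Y i) ω ≤ -((n:ℝ) * ε)}).toReal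
      ≤ Real.exp (-2 * n * ε ^ 2 / (b - a) ^ 2) := by
    refine (measure_le_le_exp_mul_mgf (-((n:ℝ) * ε)) (neg_nonpos.2 ht₀.le)
      (hint_sum (-t₀))).trans ?_
    calc Real.exp (-(-t₀) * -((n:ℝ) * ε)) * mgf (∑ i, Y i) ℙ (-t₀)
        ≤ Real.exp (-(-t₀) * -((n:ℝ) * ε)) * Real.exp ((n:ℝ) * ((-t₀) ^ 2 * (b - a) ^ 2 / 8)) :=
          mul_le_mul_of_nonneg_left (hmgf_sum (-t₀)) (Real.exp_pos _).le
      _ = Real.exp (-2 * n * ε ^ 2 / (b - a) ^ 2) := by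
          rw [← Real.exp_add]
          congr 1
          rw [ht₀_def]
          field_simp
          ring
  have hsub : {ω | ε ≤ |(∑ i, X i ω) / n - μ|}
      ⊆ {ω | (n:ℝ) * ε ≤ (∑ i, Y i) ω} ∪ {ω | (∑ i, Y i) ω ≤ -((n:ℝ) * ε)} := by
    intro ω hω
    simp only [Set.mem_setOf_eq, Set.mem_union] at hω ⊢
    have hnpos : (0:ℝ) < n := Nat.cast_pos.2 hn'
    have hSeq : (∑ i, Y i) ω = (∑ i, X i ω) - n * μ := by
      simp [hY_def, Finset.sum_apply, Finset.sum_sub_distrib, Finset.card_univ, mul_comm]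
    have habs : (∑ i, X i ω) / n - μ = ((∑ i, Y i) ω) / n := by
      rw [hSeq]
      field_simp
    rw [habs, abs_div, abs_of_pos hnpos, le_div_iff₀ hnpos] at hω
    have h1 : (n:ℝ) * ε ≤ |(∑ i, Y i) ω| := by linarith [hω, mul_comm ε (n:ℝ)]
    rcases le_abs.1 h1 with h | h
    · exact Or.inl h
    · exact Or.inr (by linarith)
  calc ℙ {ω | ε ≤ |(∑ i, X i ω) / n - μ|}
      ≤ ℙ ({ω | (n:ℝ) * ε ≤ (∑ i, Y i) ω} ∪ {ω | (∑ i, Y i) ω ≤ -((n:ℝ) * ε)}) :=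
        measure_mono hsub
    _ ≤ ℙ {ω | (n:ℝ) * ε ≤ (∑ i, Y i) ω} + ℙ {ω | (∑ i, Y i) ω ≤ -((n:ℝ) * ε)} :=
        measure_union_le _ _
    _ ≤ ENNReal.ofReal (Real.exp (-2 * n * ε ^ 2 / (b - a) ^ 2))
        + ENNReal.ofReal (Real.exp (-2 * n * ε ^ 2 / (b - a) ^ 2)) := by
        refine add_le_add ?_ ?_
        · rw [← ENNReal.ofReal_toReal (measure_ne_top ℙ _)]
          exact ENNReal.ofReal_le_ofReal hup
        · rw [← ENNReal.ofReal_toReal (measure_ne_top ℙ _)]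
          exact ENNReal.ofReal_le_ofReal hlo
    _ = ENNReal.ofReal (2 * Real.exp (-2 * n * ε ^ 2 / (b - a) ^ 2)) := by
        rw [← ENNReal.ofReal_add (Real.exp_pos _).le (Real.exp_pos _).le]
        congr 1
        ring
end
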